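/- Fix 0 < r < 1. Let ξ ∈ ℝ²_{>0}, q ∈ [r,1), and λ ∈ (1, 1/q). Then the infimum inf_{q < s < 1/λ} L^{s,λs}(ξ) equals L^{s₀, λs₀}(ξ) with s₀ = max{q, p̄₋^λ(ξ)}; moreover, if p̄₋^λ(ξ) > q the infimum is uniquely attained at s = p̄₋^λ(ξ), while if p̄₋^λ(ξ) ≤ q then s ↦ L^{s,λs}(ξ) is strictly increasing on (q, 1/λ). -/

import Mathlib

noncomputable section

/-- The stationary shape function `M^p(a,b) = pa/(1−p) + rb/(p−r)`. -/
def Mfun (r p a b : ℝ) : ℝ := p * a / (1 - p) + r * b / (p - r)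

/-- The minimizing parameter `p̄(a,b)`. -/
def pbar (r a b : ℝ) : ℝ :=
  (r * (a + b) + (r + 1) * Real.sqrt (r * a * b)) /
    (a + r * b + 2 * Real.sqrt (r * a * b))

/-- `L^{p,q}(ξ) = ξ₁ log((1−p)/(1−q)) + ξ₂ log((1−r/q)/(1−r/p))`. -/
def Lfun (r p q x₁ x₂ : ℝ) : ℝ :=
  x₁ * Real.log ((1 - p) / (1 - q)) + x₂ * Real.log ((1 - r / q) / (1 - r / p))

lemma lfun_hasDerivAt (r lam x₁ x₂ s : ℝ) (hr0 : 0 < r) (hlam : 1 < lam)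
    (hs : r < s) (hls : lam * s < 1) :
    HasDerivAt (fun t => Lfun r t (lam * t) x₁ x₂)
      ((lam - 1) * (x₁ * (s - r) * (lam * s - r) - r * x₂ * (1 - s) * (1 - lam * s)) /
        ((1 - s) * (1 - lam * s) * (s - r) * (lam * s - r))) s := by
  have hs0 : 0 < s := hr0.trans hs
  have hsl : s < lam * s := by nlinarith
  have hs1 : s < 1 := hsl.trans hls
  have h1s : (0:ℝ) < 1 - s := by linarith
  have h1ls : (0:ℝ) < 1 - lam * s := by linarith
  have hsr : (0:ℝ) < s - r := by linarith
  have hlsr : (0:ℝ) < lam * s - r := by linarith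
  have hlam0 : (0:ℝ) < lam := by linarith
  have hA : HasDerivAt (fun t : ℝ => (1 - t) / (1 - lam * t))
      (((-1) * (1 - lam * s) - (1 - s) * (-lam)) / (1 - lam * s) ^ 2) s := by
    simpa [Pi.div_def] using HasDerivAt.div ((hasDerivAt_id s).const_sub 1)
      (((hasDerivAt_id s).const_mul lam).const_sub 1) h1ls.ne'
  have hApos : (0:ℝ) < (1 - s) / (1 - lam * s) := div_pos h1s h1ls
  have hlogA := hA.log hApos.ne'
  have hu : HasDerivAt (fun t : ℝ => 1 - r / (lam * t))
      (-((0 * (lam * s) - r * lam) / (lam * s) ^ 2)) s := by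
    simpa using ((hasDerivAt_const s r).div ((hasDerivAt_id s).const_mul lam)
      (by positivity)).const_sub 1
  have hv : HasDerivAt (fun t : ℝ => 1 - r / t)
      (-((0 * s - r * 1) / s ^ 2)) s := by
    simpa using ((hasDerivAt_const s r).div (hasDerivAt_id s) hs0.ne').const_sub 1
  have hupos : (0:ℝ) < 1 - r / (lam * s) := by
    rw [sub_pos, div_lt_one (by positivity)]; linarith
  have hvpos : (0:ℝ) < 1 - r / s := by
    rw [sub_pos, div_lt_one hs0]; linarith
  have hB := hu.fun_div hv hvpos.ne'
  have hBpos : (0:ℝ) < (1 - r / (lam * s)) / (1 - r / s) := div_pos hupos hvpos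
  have hlogB := hB.log hBpos.ne'
  have hsum := (hlogA.const_mul x₁).add (hlogB.const_mul x₂)
  have hfe : (fun t => Lfun r t (lam * t) x₁ x₂) =
      fun t => x₁ * Real.log ((1 - t) / (1 - lam * t)) +
        x₂ * Real.log ((1 - r / (lam * t)) / (1 - r / t)) := rfl
  rw [hfe]
  refine hsum.congr_deriv ?_
  field_simp
  ring


lemma gzero_of_M (r lam x₁ x₂ pm : ℝ) (hr0 : 0 < r) (hlam : 1 < lam)
    (hrp : r < pm) (hl1 : lam * pm < 1)
    (hpm3 : Mfun r pm x₁ x₂ = Mfun r (lam * pm) x₁ x₂) :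
    x₁ * (pm - r) * (lam * pm - r) = r * x₂ * (1 - pm) * (1 - lam * pm) := by
  have hp0 : 0 < pm := hr0.trans hrp
  have hpl : pm < lam * pm := by nlinarith
  have h1p : (0:ℝ) < 1 - pm := by linarith
  have h1lp : (0:ℝ) < 1 - lam * pm := by linarith
  have hpr : (0:ℝ) < pm - r := by linarith
  have hlpr : (0:ℝ) < lam * pm - r := by linarith
  unfold Mfun at hpm3
  have e1 : 1 - pm * lam ≠ 0 := by nlinarith
  have e2 : pm * lam - r ≠ 0 := by nlinarith
  field_simp at hpm3
  have hne : pm * (lam - 1) ≠ 0 := by nlinarith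
  apply mul_left_cancel₀ hne
  nlinarith [hpm3]

lemma g_pos (r lam x₁ x₂ pm s : ℝ) (hr0 : 0 < r) (hlam : 1 < lam)
    (h1 : 0 < x₁) (h2 : 0 < x₂) (hrp : r < pm)
    (hg0 : x₁ * (pm - r) * (lam * pm - r) = r * x₂ * (1 - pm) * (1 - lam * pm))
    (hps : pm < s) (hls : lam * s < 1) :
    0 < x₁ * (s - r) * (lam * s - r) - r * x₂ * (1 - s) * (1 - lam * s) := by
  have hp0 : 0 < pm := hr0.trans hrp
  have hs1 : s < 1 := by nlinarith
  have hlpr : (0:ℝ) < lam * pm - r := by nlinarith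
  have hA : (pm - r) * (lam * pm - r) < (s - r) * (lam * s - r) := by
    apply mul_lt_mul (by linarith) (by nlinarith) hlpr (by linarith)
  have hB : (1 - s) * (1 - lam * s) < (1 - pm) * (1 - lam * pm) := by
    apply mul_lt_mul (by linarith) (by nlinarith) (by linarith) (by nlinarith)
  nlinarith [mul_lt_mul_of_pos_left hA h1, mul_lt_mul_of_pos_left hB (mul_pos hr0 h2)]

lemma g_neg (r lam x₁ x₂ pm s : ℝ) (hr0 : 0 < r) (hlam : 1 < lam)
    (h1 : 0 < x₁) (h2 : 0 < x₂) (hpm1 : pm < 1) (hl1 : lam * pm < 1)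
    (hg0 : x₁ * (pm - r) * (lam * pm - r) = r * x₂ * (1 - pm) * (1 - lam * pm))
    (hrs : r < s) (hsp : s < pm) :
    x₁ * (s - r) * (lam * s - r) - r * x₂ * (1 - s) * (1 - lam * s) < 0 := by
  have hs0 : 0 < s := hr0.trans hrs
  have hA : (s - r) * (lam * s - r) < (pm - r) * (lam * pm - r) := by
    apply mul_lt_mul (by linarith) (by nlinarith) (by nlinarith) (by linarith)
  have hB : (1 - pm) * (1 - lam * pm) < (1 - s) * (1 - lam * s) := by
    apply mul_lt_mul (by linarith) (by nlinarith) (by linarith) (by linarith)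
  nlinarith [mul_lt_mul_of_pos_left hA h1, mul_lt_mul_of_pos_left hB (mul_pos hr0 h2)]

theorem restricted_logMGF_inf (r : ℝ) (hr0 : 0 < r) (hr1 : r < 1)
    (x₁ x₂ : ℝ) (h1 : 0 < x₁) (h2 : 0 < x₂)
    (q : ℝ) (hq : q ∈ Set.Ico r 1) (lam : ℝ) (hlam : lam ∈ Set.Ioo 1 (1 / q))
    (pm : ℝ) (hpm1 : pm ∈ Set.Ioo r (pbar r x₁ x₂))
    (hpm2 : lam * pm ∈ Set.Ioo (pbar r x₁ x₂) 1)
    (hpm3 : Mfun r pm x₁ x₂ = Mfun r (lam * pm) x₁ x₂) :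
    sInf ((fun s => Lfun r s (lam * s) x₁ x₂) '' Set.Ioo q (1 / lam))
        = Lfun r (max q pm) (lam * max q pm) x₁ x₂ ∧
    (q < pm → pm ∈ Set.Ioo q (1 / lam) ∧
      ∀ s ∈ Set.Ioo q (1 / lam), s ≠ pm →
        Lfun r pm (lam * pm) x₁ x₂ < Lfun r s (lam * s) x₁ x₂) ∧
    (pm ≤ q → StrictMonoOn (fun s => Lfun r s (lam * s) x₁ x₂) (Set.Ioo q (1 / lam))) := by
  obtain ⟨hrq, hq1⟩ := hq
  obtain ⟨hlam1, hlamq⟩ := hlam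
  obtain ⟨hrpm, -⟩ := hpm1
  obtain ⟨-, hlpm1⟩ := hpm2
  have hlam0 : (0:ℝ) < lam := by linarith
  have hq0 : (0:ℝ) < q := hr0.trans_le hrq
  have hql : lam * q < 1 := by
    have := (lt_div_iff₀ hq0).1 hlamq; linarith [this]
  have hqc : q < 1 / lam := by rw [lt_div_iff₀ hlam0]; linarith
  have hpm0 : (0:ℝ) < pm := hr0.trans hrpm
  have hpmlpm : pm < lam * pm := by nlinarith
  have hpm_lt1 : pm < 1 := hpmlpm.trans hlpm1
  have hpmc : pm < 1 / lam := by rw [lt_div_iff₀ hlam0]; linarith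
  -- key algebraic identity: g(pm) = 0
  have hg0 : x₁ * (pm - r) * (lam * pm - r) = r * x₂ * (1 - pm) * (1 - lam * pm) :=
    gzero_of_M r lam x₁ x₂ pm hr0 hlam1 hrpm hlpm1 hpm3
  set f := fun s => Lfun r s (lam * s) x₁ x₂ with hf
  have hder : ∀ s, r < s → lam * s < 1 →
      HasDerivAt f ((lam - 1) *
        (x₁ * (s - r) * (lam * s - r) - r * x₂ * (1 - s) * (1 - lam * s)) /
        ((1 - s) * (1 - lam * s) * (s - r) * (lam * s - r))) s :=
    fun s hs hls => lfun_hasDerivAt r lam x₁ x₂ s hr0 hlam1 hs hls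
  have hgpos : ∀ s, pm < s → lam * s < 1 →
      0 < x₁ * (s - r) * (lam * s - r) - r * x₂ * (1 - s) * (1 - lam * s) :=
    fun s hps hls => g_pos r lam x₁ x₂ pm s hr0 hlam1 h1 h2 hrpm hg0 hps hls
  have hgneg : ∀ s, r < s → s < pm →
      x₁ * (s - r) * (lam * s - r) - r * x₂ * (1 - s) * (1 - lam * s) < 0 :=
    fun s hrs hsp => g_neg r lam x₁ x₂ pm s hr0 hlam1 h1 h2 hpm_lt1 hlpm1 hg0 hrs hsp
  have hcts : ∀ s, r < s → lam * s < 1 → ContinuousAt f s :=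
    fun s hs hls => (hder s hs hls).continuousAt
  have hltc : ∀ s : ℝ, s < 1 / lam → lam * s < 1 := by
    intro s hs; rw [lt_div_iff₀ hlam0] at hs; linarith
  have hrmax : r < max q pm := lt_of_lt_of_le hrpm (le_max_right _ _)
  have hmaxc : max q pm < 1 / lam := max_lt hqc hpmc
  -- strict monotonicity on [max q pm, 1/lam)
  have hmono : StrictMonoOn f (Set.Ico (max q pm) (1 / lam)) := by
    apply strictMonoOn_of_deriv_pos (convex_Ico _ _)
    · intro t ht
      exact (hcts t (lt_of_lt_of_le hrmax ht.1) (hltc t ht.2)).continuousWithinAt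
    · intro t ht
      rw [interior_Ico] at ht
      have hrt : r < t := hrmax.trans ht.1
      have hlt : lam * t < 1 := hltc t ht.2
      rw [(hder t hrt hlt).deriv]
      have hpt : pm < t := lt_of_le_of_lt (le_max_right q pm) ht.1
      have ht1 : t < 1 := by nlinarith
      apply div_pos (mul_pos (by linarith) (hgpos t hpt hlt))
      have : (0:ℝ) < lam * t - r := by nlinarith
      apply mul_pos (mul_pos (mul_pos (by linarith) (by linarith)) (by linarith)) this
  -- strict antitonicity on (q, pm]
  have hanti : StrictAntiOn f (Set.Ioc q pm) := by
    apply strictAntiOn_of_deriv_neg (convex_Ioc _ _)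
    · intro t ht
      have hrt : r < t := lt_of_le_of_lt hrq ht.1
      have hlt : lam * t < 1 := by nlinarith [ht.2]
      exact (hcts t hrt hlt).continuousWithinAt
    · intro t ht
      rw [interior_Ioc] at ht
      have hrt : r < t := lt_of_le_of_lt hrq ht.1
      have hlt : lam * t < 1 := by nlinarith [ht.2]
      rw [(hder t hrt hlt).deriv]
      have ht1 : t < 1 := by nlinarith
      apply div_neg_of_neg_of_pos
      · have := hgneg t hrt ht.2
        nlinarith
      · have : (0:ℝ) < lam * t - r := by nlinarith
        apply mul_pos (mul_pos (mul_pos (by linarith) (by linarith)) (by linarith)) this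
  -- part 2
  have part2 : q < pm → pm ∈ Set.Ioo q (1 / lam) ∧
      ∀ s ∈ Set.Ioo q (1 / lam), s ≠ pm → f pm < f s := by
    intro hqpm
    refine ⟨⟨hqpm, hpmc⟩, ?_⟩
    intro s hs hne
    rcases hne.lt_or_gt with h | h
    · exact hanti ⟨hs.1, h.le⟩ ⟨hqpm, le_rfl⟩ h
    · have hmax : max q pm = pm := max_eq_right hqpm.le
      exact hmono (by rw [hmax]; exact ⟨le_rfl, hpmc⟩)
        (by rw [hmax]; exact ⟨h.le, hs.2⟩) h
  -- part 3
  have part3 : pm ≤ q → StrictMonoOn f (Set.Ioo q (1 / lam)) := by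
    intro hple
    have hmax : max q pm = q := max_eq_left hple
    refine hmono.mono ?_
    intro s hs
    rw [hmax]
    exact ⟨hs.1.le, hs.2⟩
  refine ⟨?_, part2, part3⟩
  -- part 1 : the infimum
  show sInf (f '' Set.Ioo q (1 / lam)) = f (max q pm)
  rcases le_or_gt pm q with hple | hqpm
  · have hmax : max q pm = q := max_eq_left hple
    rw [hmax]
    have hrq' : r < q := lt_of_lt_of_le hrpm hple
    have hqmem : q ∈ Set.Ico (max q pm) (1 / lam) := by rw [hmax]; exact ⟨le_rfl, hqc⟩
    have hlb : ∀ y ∈ f '' Set.Ioo q (1 / lam), f q ≤ y := by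
      rintro y ⟨s, hs, rfl⟩
      exact (hmono hqmem (by rw [hmax]; exact ⟨hs.1.le, hs.2⟩) hs.1).le
    have hbdd : BddBelow (f '' Set.Ioo q (1 / lam)) := ⟨f q, hlb⟩
    have hne : (f '' Set.Ioo q (1 / lam)).Nonempty :=
      ⟨f ((q + 1 / lam) / 2), ⟨(q + 1 / lam) / 2, ⟨by linarith, by linarith⟩, rfl⟩⟩
    refine le_antisymm ?_ (le_csInf hne hlb)
    have htend : Filter.Tendsto f (nhdsWithin q (Set.Ioi q)) (nhds (f q)) :=
      ((hcts q hrq' hql).tendsto).mono_left nhdsWithin_le_nhds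
    refine ge_of_tendsto htend ?_
    filter_upwards [Ioo_mem_nhdsGT_of_mem ⟨le_refl q, hqc⟩] with s hs
    exact csInf_le hbdd ⟨s, hs, rfl⟩
  · have hmax : max q pm = pm := max_eq_right hqpm.le
    rw [hmax]
    obtain ⟨hmem, hstrict⟩ := part2 hqpm
    apply IsLeast.csInf_eq
    refine ⟨⟨pm, hmem, rfl⟩, ?_⟩
    rintro y ⟨s, hs, rfl⟩
    by_cases hne : s = pm
    · rw [hne]
    · exact (hstrict s hs hne).le

end
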